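/- Let α, β, γ be positive irrational numbers with α + β + γ = 1 and max(α, β) < γ. Set B̃_β = {b̃(n)} with b̃(n) = b(n) - [b(n) ∈ B_α], and let B̃_γ = ℕ \ (B_α ∪ B̃_β) with increasing enumeration (c̃(n)). Then for all n, c(n) - c̃(n) ∈ {0, 1, 2}, where c(n) = ⌊n/γ⌋. -/

import Mathlib

open scoped Classical

def beatty (α : ℝ) : Set ℤ := {m | ∃ n : ℕ, 0 < n ∧ m = ⌊(n : ℝ) / α⌋}

noncomputable def countLe (S : Set ℤ) (m : ℤ) : ℕ :=
  ((Finset.Icc 1 m).filter (fun k => k ∈ S)).card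

noncomputable def btil (α β : ℝ) (n : ℕ) : ℤ :=
  if ⌊(n : ℝ) / β⌋ ∈ beatty α then ⌊(n : ℝ) / β⌋ - 1 else ⌊(n : ℝ) / β⌋

noncomputable def gfun (α β : ℝ) (k : ℤ) : ℤ :=
  if ⌊(k : ℝ) / β⌋ ∈ beatty α then ⌊(k : ℝ) / β⌋ - 1 else ⌊(k : ℝ) / β⌋

lemma btil_eq_gfun (α β : ℝ) (n : ℕ) : btil α β n = gfun α β (n : ℤ) := by
  simp [btil, gfun]

lemma floorDiv_mem_beatty {α : ℝ} {k : ℤ} (hk : 1 ≤ k) :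
    ⌊(k : ℝ) / α⌋ ∈ beatty α := by
  refine ⟨k.toNat, by omega, ?_⟩
  have h : ((k.toNat : ℕ) : ℝ) = (k : ℝ) := by
    exact_mod_cast congrArg (fun z : ℤ => (z : ℝ)) (Int.toNat_of_nonneg (by omega))
  rw [h]

lemma mem_beatty_iff {α : ℝ} (ha : 0 < α) (hirr : Irrational α) {k : ℤ} :
    k ∈ beatty α ↔ ∃ n : ℤ, 1 ≤ n ∧ (k : ℝ) * α < n ∧ (n : ℝ) < ((k : ℝ) + 1) * α := by
  constructor
  · rintro ⟨n, hn, rfl⟩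
    refine ⟨(n : ℤ), by exact_mod_cast hn, ?_, ?_⟩
    · have h1 : (⌊(n : ℝ) / α⌋ : ℝ) ≤ (n : ℝ) / α := Int.floor_le _
      have h2 : (⌊(n : ℝ) / α⌋ : ℝ) * α ≤ (n : ℝ) := by
        rw [← le_div_iff₀ ha]; exact h1
      have h2' : (((n : ℤ) : ℤ) : ℝ) = (n : ℝ) := by push_cast; ring
      rcases eq_or_ne ⌊(n : ℝ) / α⌋ 0 with h0 | h0
      · rw [h0]; push_cast; simpa using (by exact_mod_cast hn : (0:ℝ) < n)
      · have := (hirr.intCast_mul h0).ne_int (n : ℤ)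
        push_cast at this ⊢
        exact lt_of_le_of_ne h2 this
    · have h3 := Int.lt_floor_add_one ((n : ℝ) / α)
      rw [div_lt_iff₀ ha] at h3
      push_cast at h3 ⊢
      linarith
  · rintro ⟨n, hn1, hn2, hn3⟩
    have hn0 : 0 ≤ n := by omega
    refine ⟨n.toNat, by omega, ?_⟩
    have hcast : ((n.toNat : ℕ) : ℝ) = (n : ℝ) := by
      exact_mod_cast congrArg (fun z : ℤ => (z : ℝ)) (Int.toNat_of_nonneg hn0)
    rw [hcast]
    symm
    rw [Int.floor_eq_iff]
    constructor
    · rw [le_div_iff₀ ha]; linarith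
    · rw [div_lt_iff₀ ha]; push_cast; linarith

lemma fract_gt_of_mem_beatty {α : ℝ} (ha : 0 < α) (ha1 : α < 1) (hirr : Irrational α)
    {k : ℤ} (hk : k ∈ beatty α) : 1 - α < Int.fract ((k : ℝ) * α) := by
  obtain ⟨n, hn1, hn2, hn3⟩ := (mem_beatty_iff ha hirr).mp hk
  have hexp : ((k : ℝ) + 1) * α = (k : ℝ) * α + α := by ring
  have hfl : ⌊(k : ℝ) * α⌋ = n - 1 := by
    rw [Int.floor_eq_iff]
    constructor
    · push_cast; linarith [hn3, hexp]
    · push_cast; linarith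
  have hfr : Int.fract ((k : ℝ) * α) = (k : ℝ) * α - ((n : ℝ) - 1) := by
    rw [← Int.self_sub_floor, hfl]; push_cast; ring
  rw [hfr]; linarith [hn2, hn3, hexp]

lemma mem_beatty_of_fract_gt {α : ℝ} (ha : 0 < α) (ha1 : α < 1) (hirr : Irrational α)
    {k : ℤ} (hk : 1 ≤ k) (h : 1 - α < Int.fract ((k : ℝ) * α)) : k ∈ beatty α := by
  have hk0 : (0:ℝ) ≤ (k : ℝ) * α := by
    have : (1:ℝ) ≤ (k:ℝ) := by exact_mod_cast hk
    nlinarith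
  have hfl0 : 0 ≤ ⌊(k : ℝ) * α⌋ := Int.floor_nonneg.mpr hk0
  have hfr : Int.fract ((k:ℝ)*α) = (k:ℝ)*α - (⌊(k:ℝ)*α⌋ : ℝ) := by
    rw [← Int.self_sub_floor]
  rw [mem_beatty_iff ha hirr]
  refine ⟨⌊(k:ℝ)*α⌋ + 1, by omega, ?_, ?_⟩
  · push_cast
    linarith [Int.lt_floor_add_one ((k:ℝ)*α)]
  · push_cast
    linarith [hfr, h]

lemma not_consec_beatty {α : ℝ} (ha : 0 < α) (ha2 : 2*α < 1) (hirr : Irrational α)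
    {k : ℤ} (h1 : k ∈ beatty α) (h2 : k + 1 ∈ beatty α) : False := by
  obtain ⟨n1, hn11, hn12, hn13⟩ := (mem_beatty_iff ha hirr).mp h1
  obtain ⟨n2, hn21, hn22, hn23⟩ := (mem_beatty_iff ha hirr).mp h2
  push_cast at hn22 hn23
  have hlt : n1 < n2 := by
    have : (n1:ℝ) < (n2:ℝ) := by linarith
    exact_mod_cast this
  have : (n1:ℝ) + 1 ≤ (n2:ℝ) := by exact_mod_cast hlt
  nlinarith

lemma floorDiv_lt_floorDiv {α : ℝ} (ha : 0 < α) (ha1 : α ≤ 1) {a b : ℤ} (h : a < b) :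
    ⌊(a:ℝ)/α⌋ < ⌊(b:ℝ)/α⌋ := by
  have h1 : (a:ℝ)/α + 1 ≤ (b:ℝ)/α := by
    have hab : (a:ℝ) + 1 ≤ (b:ℝ) := by exact_mod_cast h
    have h2 : ((a:ℝ)+1)/α = (a:ℝ)/α + 1/α := by ring
    have h3 : (1:ℝ) ≤ 1/α := by rw [le_div_iff₀ ha]; linarith
    have h4 : ((a:ℝ)+1)/α ≤ (b:ℝ)/α := by gcongr
    linarith
  have := Int.floor_le_floor h1
  rw [Int.floor_add_one] at this
  omega

lemma floorDiv_step {β : ℝ} (hb : 0 < β) (hb2 : 2*β ≤ 1) {a b : ℤ} (h : a < b) :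
    ⌊(a:ℝ)/β⌋ + 2 ≤ ⌊(b:ℝ)/β⌋ := by
  have h1 : (a:ℝ)/β + 2 ≤ (b:ℝ)/β := by
    have hab : (a:ℝ) + 1 ≤ (b:ℝ) := by exact_mod_cast h
    have h2 : ((a:ℝ)+1)/β = (a:ℝ)/β + 1/β := by ring
    have h3 : (2:ℝ) ≤ 1/β := by rw [le_div_iff₀ hb]; linarith
    have h4 : ((a:ℝ)+1)/β ≤ (b:ℝ)/β := by gcongr
    linarith
  have h5 : (a:ℝ)/β + 2 = (a:ℝ)/β + ((2:ℤ):ℝ) := by push_cast; ring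
  have := Int.floor_le_floor h1
  rw [h5, Int.floor_add_intCast] at this
  omega

lemma gfun_lt {α β : ℝ} (hb : 0 < β) (hb2 : 2*β ≤ 1) {a b : ℤ} (h : a < b) :
    gfun α β a < gfun α β b := by
  have key := floorDiv_step hb hb2 h
  unfold gfun
  split_ifs <;> omega

lemma gfun_mono {α β : ℝ} (hb : 0 < β) (hb2 : 2*β ≤ 1) {a b : ℤ} (h : a ≤ b) :
    gfun α β a ≤ gfun α β b := by
  rcases h.lt_or_eq with h' | h'
  · exact (gfun_lt hb hb2 h').le
  · rw [h']

lemma one_le_gfun {α β : ℝ} (hb : 0 < β) (hb2 : 2*β ≤ 1) {n : ℤ} (hn : 1 ≤ n) :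
    1 ≤ gfun α β n := by
  have h1 : 2 ≤ ⌊(n:ℝ)/β⌋ := by
    rw [Int.le_floor]
    push_cast
    rw [le_div_iff₀ hb]
    have : (1:ℝ) ≤ (n:ℝ) := by exact_mod_cast hn
    linarith
  unfold gfun
  split_ifs <;> omega
lemma count_formula (S : Set ℤ) (f : ℤ → ℤ) (K m : ℤ) (hK : 0 ≤ K)
    (hmono : ∀ a b : ℤ, a < b → f a < f b)
    (hmem : ∀ n : ℤ, 1 ≤ n → n ≤ K → (1 ≤ f n ∧ f n ≤ m ∧ f n ∈ S))
    (hsurj : ∀ k : ℤ, 1 ≤ k → k ≤ m → k ∈ S → ∃ n : ℤ, 1 ≤ n ∧ n ≤ K ∧ f n = k) :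
    countLe S m = K.toNat := by
  unfold countLe
  have himg : (Finset.Icc 1 m).filter (fun k => k ∈ S) = (Finset.Icc 1 K).image f := by
    ext k
    simp only [Finset.mem_filter, Finset.mem_image, Finset.mem_Icc]
    constructor
    · rintro ⟨⟨h1, h2⟩, h3⟩
      obtain ⟨n, hn1, hn2, hn3⟩ := hsurj k h1 h2 h3
      exact ⟨n, ⟨hn1, hn2⟩, hn3⟩
    · rintro ⟨n, ⟨hn1, hn2⟩, rfl⟩
      obtain ⟨g1, g2, g3⟩ := hmem n hn1 hn2
      exact ⟨⟨g1, g2⟩, g3⟩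
  rw [himg, Finset.card_image_of_injOn, Int.card_Icc]
  · norm_num
  · intro a _ b _ hab
    by_contra h
    rcases lt_or_gt_of_ne h with h' | h'
    · exact absurd hab (hmono a b h').ne
    · exact absurd hab.symm (hmono b a h').ne

lemma countLe_mono (S : Set ℤ) {m m' : ℤ} (h : m ≤ m') : countLe S m ≤ countLe S m' := by
  unfold countLe
  exact Finset.card_le_card (Finset.filter_subset_filter _ (Finset.Icc_subset_Icc_right h))

lemma countLe_beatty {α : ℝ} (ha : 0 < α) (ha1 : α < 1) (hirr : Irrational α)
    (m : ℤ) (hm : 0 ≤ m) :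
    countLe (beatty α) m = (⌊((m:ℝ)+1)*α⌋).toNat := by
  have hK0 : 0 ≤ ⌊((m:ℝ)+1)*α⌋ := by
    apply Int.floor_nonneg.mpr
    have : (0:ℝ) ≤ (m:ℝ) := by exact_mod_cast hm
    nlinarith
  apply count_formula (beatty α) (fun n => ⌊(n:ℝ)/α⌋) _ m hK0
  · exact fun a b h => floorDiv_lt_floorDiv ha ha1.le h
  · intro n h1n hnK
    have hfn1 : 1 ≤ ⌊(n:ℝ)/α⌋ := by
      rw [Int.le_floor]
      push_cast
      rw [le_div_iff₀ ha]
      have : (1:ℝ) ≤ (n:ℝ) := by exact_mod_cast h1n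
      linarith
    refine ⟨hfn1, ?_, floorDiv_mem_beatty h1n⟩
    have hlt : (n:ℝ) < ((m:ℝ)+1)*α := by
      have hle : (n:ℝ) ≤ ((m:ℝ)+1)*α := Int.le_floor.mp hnK
      have hne : ((m:ℝ)+1)*α ≠ (n:ℝ) := by
        have := (hirr.intCast_mul (show m+1 ≠ 0 by omega)).ne_int n
        push_cast at this
        convert this using 2 <;> push_cast <;> ring
      exact lt_of_le_of_ne hle (Ne.symm hne)
    have : (n:ℝ)/α < ((m:ℝ)+1) := by rw [div_lt_iff₀ ha]; linarith
    have h2 : ⌊(n:ℝ)/α⌋ < m + 1 := by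
      apply Int.floor_lt.mpr
      push_cast
      linarith
    omega
  · intro k hk1 hk2 hk3
    obtain ⟨n, hn1, hn2, hn3⟩ := (mem_beatty_iff ha hirr).mp hk3
    refine ⟨n, hn1, ?_, ?_⟩
    · rw [Int.le_floor]
      have hkm : (k:ℝ) + 1 ≤ (m:ℝ) + 1 := by
        have : (k:ℝ) ≤ (m:ℝ) := by exact_mod_cast hk2
        linarith
      have : ((k:ℝ)+1)*α ≤ ((m:ℝ)+1)*α := by nlinarith
      linarith
    · rw [Int.floor_eq_iff]
      constructor
      · rw [le_div_iff₀ ha]; linarith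
      · rw [div_lt_iff₀ ha]; push_cast; linarith
lemma mem_Btil_iff {α β : ℝ} {Btβ : Set ℤ}
    (hBtβ : Btβ = {m : ℤ | ∃ n : ℕ, 0 < n ∧ m = btil α β n}) {k : ℤ} :
    k ∈ Btβ ↔ ∃ n : ℤ, 1 ≤ n ∧ k = gfun α β n := by
  rw [hBtβ]
  simp only [Set.mem_setOf_eq]
  constructor
  · rintro ⟨n, hn, rfl⟩
    exact ⟨(n:ℤ), by exact_mod_cast hn, by rw [btil_eq_gfun]⟩
  · rintro ⟨n, hn, rfl⟩
    refine ⟨n.toNat, by omega, ?_⟩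
    rw [btil_eq_gfun]
    congr 1
    omega

lemma countLe_Btil {α β : ℝ} (ha : 0 < α) (ha1 : α < 1) (hirra : Irrational α)
    (hb : 0 < β) (hb2 : 2*β < 1) (hirrb : Irrational β) {Btβ : Set ℤ}
    (hBtβ : Btβ = {m : ℤ | ∃ n : ℕ, 0 < n ∧ m = btil α β n})
    (m : ℤ) (hm : 0 ≤ m) :
    countLe Btβ m = (⌊((m:ℝ)+1)*β⌋ +
      if ((m+1) ∈ beatty α ∧ (m+1) ∈ beatty β) then 1 else 0).toNat := by
  have hm1R : (0:ℝ) ≤ (m:ℝ) := by exact_mod_cast hm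
  set t := ⌊((m:ℝ)+1)*β⌋ with ht
  have ht0 : 0 ≤ t := Int.floor_nonneg.mpr (by nlinarith)
  have htle : (t:ℝ) ≤ ((m:ℝ)+1)*β := Int.floor_le _
  have htne : ((m:ℝ)+1)*β ≠ (t:ℝ) := by
    have := (hirrb.intCast_mul (show m+1 ≠ 0 by omega)).ne_int t
    push_cast at this
    convert this using 2 <;> push_cast <;> ring
  have htlt : (t:ℝ) < ((m:ℝ)+1)*β := lt_of_le_of_ne htle (Ne.symm htne)
  have htlt2 : ((m:ℝ)+1)*β < (t:ℝ) + 1 := Int.lt_floor_add_one _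
  by_cases hd : ((m+1) ∈ beatty α ∧ (m+1) ∈ beatty β)
  · -- δ = 1 case
    rw [if_pos hd]
    obtain ⟨n0, hn01, hn02, hn03⟩ := (mem_beatty_iff hb hirrb).mp hd.2
    push_cast at hn02 hn03
    have hn0t : n0 = t + 1 := by
      have l1 : (t:ℝ) < (n0:ℝ) := lt_of_le_of_lt htle hn02
      have l2 : (n0:ℝ) < (t:ℝ) + 2 := by nlinarith
      have l1' : t < n0 := by exact_mod_cast l1
      have l2' : n0 < t + 2 := by exact_mod_cast l2
      omega
    have hflK : ⌊((t:ℝ)+1)/β⌋ = m + 1 := by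
      rw [Int.floor_eq_iff]
      constructor
      · push_cast
        rw [le_div_iff₀ hb]
        rw [hn0t] at hn02; push_cast at hn02
        linarith
      · push_cast
        rw [div_lt_iff₀ hb]
        rw [hn0t] at hn03; push_cast at hn03
        linarith
    have hgK : gfun α β (t+1) = m := by
      unfold gfun
      have harg : ((t+1:ℤ):ℝ) = (t:ℝ) + 1 := by push_cast; ring
      rw [harg, hflK, if_pos hd.1]
      ring
    apply count_formula Btβ (gfun α β) (t+1) m (by omega)
    · exact fun a b h => gfun_lt hb hb2.le h
    · intro n h1n hnK
      refine ⟨one_le_gfun hb hb2.le h1n, ?_, ?_⟩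
      · have := gfun_mono (α := α) hb hb2.le hnK
        omega
      · rw [mem_Btil_iff hBtβ]
        exact ⟨n, h1n, rfl⟩
    · intro k hk1 hk2 hk3
      obtain ⟨n, hn1, rfl⟩ := (mem_Btil_iff hBtβ).mp hk3
      refine ⟨n, hn1, ?_, rfl⟩
      by_contra hgt
      push_neg at hgt
      have hstep := floorDiv_step hb hb2.le (show t+1 < t+2 by omega)
      have harg : ((t+1:ℤ):ℝ) = (t:ℝ) + 1 := by push_cast; ring
      rw [harg, hflK] at hstep
      have hbig : m + 2 ≤ gfun α β (t+2) := by
        unfold gfun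
        split_ifs <;> omega
      have := gfun_mono (α := α) hb hb2.le (show t+2 ≤ n by omega)
      omega
  · -- δ = 0 case
    rw [if_neg hd]
    have hGt : gfun α β t ≤ m := by
      have h5 : ⌊((t:ℤ):ℝ)/β⌋ ≤ m := by
        have : ((t:ℤ):ℝ)/β < (m:ℝ) + 1 := by
          rw [div_lt_iff₀ hb]; exact htlt
        have h6 : ⌊((t:ℤ):ℝ)/β⌋ < m + 1 := Int.floor_lt.mpr (by push_cast; push_cast at this; linarith)
        omega
      unfold gfun
      split_ifs <;> omega
    have hGt1 : m + 1 ≤ gfun α β (t+1) := by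
      have h6 : m + 1 ≤ ⌊((t+1:ℤ):ℝ)/β⌋ := by
        rw [Int.le_floor]
        push_cast
        rw [le_div_iff₀ hb]
        linarith
      by_cases hmem : ⌊((t+1:ℤ):ℝ)/β⌋ ∈ beatty α
      · have hne : ⌊((t+1:ℤ):ℝ)/β⌋ ≠ m + 1 := by
          intro heq
          apply hd
          constructor
          · rw [← heq]; exact hmem
          · rw [← heq]; exact floorDiv_mem_beatty (by omega)
        unfold gfun
        rw [if_pos hmem]
        omega
      · unfold gfun
        rw [if_neg hmem]
        omega
    apply count_formula Btβ (gfun α β) (t + 0) m (by omega)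
    · exact fun a b h => gfun_lt hb hb2.le h
    · intro n h1n hnK
      refine ⟨one_le_gfun hb hb2.le h1n, ?_, ?_⟩
      · have := gfun_mono (α := α) hb hb2.le (show n ≤ t by omega)
        omega
      · rw [mem_Btil_iff hBtβ]
        exact ⟨n, h1n, rfl⟩
    · intro k hk1 hk2 hk3
      obtain ⟨n, hn1, rfl⟩ := (mem_Btil_iff hBtβ).mp hk3
      refine ⟨n, hn1, ?_, rfl⟩
      by_contra hgt
      push_neg at hgt
      have := gfun_mono (α := α) hb hb2.le (show t+1 ≤ n by omega)
      omega

lemma beatty_Btil_disjoint {α β : ℝ} (ha : 0 < α) (ha2 : 2*α < 1) (hirra : Irrational α)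
    {Btβ : Set ℤ} (hBtβ : Btβ = {m : ℤ | ∃ n : ℕ, 0 < n ∧ m = btil α β n})
    {x : ℤ} (h1 : x ∈ beatty α) (h2 : x ∈ Btβ) : False := by
  obtain ⟨n, hn1, rfl⟩ := (mem_Btil_iff hBtβ).mp h2
  unfold gfun at h1
  by_cases hc : ⌊(n:ℝ)/β⌋ ∈ beatty α
  · rw [if_pos hc] at h1
    exact not_consec_beatty ha ha2 hirra h1 (by simpa using hc)
  · rw [if_neg hc] at h1
    exact hc h1
lemma count_partition {α β : ℝ} {Btβ Btγ : Set ℤ}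
    (hdisj : ∀ x : ℤ, x ∈ beatty α → x ∈ Btβ → False)
    (hBtγ : Btγ = {m : ℤ | 0 < m ∧ m ∉ beatty α ∧ m ∉ Btβ})
    (m : ℤ) (hm : 0 ≤ m) :
    countLe (beatty α) m + countLe Btβ m + countLe Btγ m = m.toNat := by
  unfold countLe
  have h1 := Finset.card_filter_add_card_filter_not
    (s := Finset.Icc 1 m) (p := fun k => k ∈ beatty α)
  have h2 := Finset.card_filter_add_card_filter_not
    (s := (Finset.Icc 1 m).filter (fun k => ¬ k ∈ beatty α)) (p := fun k => k ∈ Btβ)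
  rw [Finset.filter_filter, Finset.filter_filter] at h2
  have e1 : (Finset.Icc 1 m).filter (fun k => ¬ k ∈ beatty α ∧ k ∈ Btβ)
      = (Finset.Icc 1 m).filter (fun k => k ∈ Btβ) := by
    apply Finset.filter_congr
    intro k _
    constructor
    · exact fun h => h.2
    · intro h
      exact ⟨fun ha => hdisj k ha h, h⟩
  have e2 : (Finset.Icc 1 m).filter (fun k => ¬ k ∈ beatty α ∧ ¬ k ∈ Btβ)
      = (Finset.Icc 1 m).filter (fun k => k ∈ Btγ) := by
    apply Finset.filter_congr
    intro k hk
    rw [Finset.mem_Icc] at hk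
    rw [hBtγ]
    simp only [Set.mem_setOf_eq]
    constructor
    · exact fun h => ⟨by omega, h.1, h.2⟩
    · exact fun h => ⟨h.2.1, h.2.2⟩
  rw [e1, e2] at h2
  have hcard : (Finset.Icc 1 m).card = m.toNat := by
    rw [Int.card_Icc]
    omega
  omega

lemma floor_sum_bounds {α β γ : ℝ} (hirra : Irrational α) (hirrb : Irrational β)
    (hirrc : Irrational γ) (hsum : α + β + γ = 1) (m' : ℤ) (hm : 1 ≤ m') :
    (1 ≤ m' - (⌊(m':ℝ)*α⌋ + ⌊(m':ℝ)*β⌋ + ⌊(m':ℝ)*γ⌋) ∧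
     m' - (⌊(m':ℝ)*α⌋ + ⌊(m':ℝ)*β⌋ + ⌊(m':ℝ)*γ⌋) ≤ 2) ∧
    ((m' - (⌊(m':ℝ)*α⌋ + ⌊(m':ℝ)*β⌋ + ⌊(m':ℝ)*γ⌋) : ℤ) : ℝ)
      = Int.fract ((m':ℝ)*α) + Int.fract ((m':ℝ)*β) + Int.fract ((m':ℝ)*γ) := by
  have hid : ((m' - (⌊(m':ℝ)*α⌋ + ⌊(m':ℝ)*β⌋ + ⌊(m':ℝ)*γ⌋) : ℤ) : ℝ)
      = Int.fract ((m':ℝ)*α) + Int.fract ((m':ℝ)*β) + Int.fract ((m':ℝ)*γ) := by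
    rw [← Int.self_sub_floor, ← Int.self_sub_floor, ← Int.self_sub_floor]
    push_cast
    have key : (m':ℝ)*α + (m':ℝ)*β + (m':ℝ)*γ = (m':ℝ) := by
      have : (m':ℝ)*α + (m':ℝ)*β + (m':ℝ)*γ = (m':ℝ)*(α+β+γ) := by ring
      rw [this, hsum, mul_one]
    linarith
  refine ⟨⟨?_, ?_⟩, hid⟩
  · have hfa : 0 < Int.fract ((m':ℝ)*α) := by
      rw [Int.fract_pos]
      exact (hirra.intCast_mul (by omega)).ne_int _
    have hfb : 0 < Int.fract ((m':ℝ)*β) := by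
      rw [Int.fract_pos]
      exact (hirrb.intCast_mul (by omega)).ne_int _
    have hfc : 0 < Int.fract ((m':ℝ)*γ) := by
      rw [Int.fract_pos]
      exact (hirrc.intCast_mul (by omega)).ne_int _
    have : (0:ℝ) < ((m' - (⌊(m':ℝ)*α⌋ + ⌊(m':ℝ)*β⌋ + ⌊(m':ℝ)*γ⌋) : ℤ) : ℝ) := by
      rw [hid]; linarith
    exact_mod_cast this
  · have hfa := Int.fract_lt_one ((m':ℝ)*α)
    have hfb := Int.fract_lt_one ((m':ℝ)*β)
    have hfc := Int.fract_lt_one ((m':ℝ)*γ)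
    have : ((m' - (⌊(m':ℝ)*α⌋ + ⌊(m':ℝ)*β⌋ + ⌊(m':ℝ)*γ⌋) : ℤ) : ℝ) < 3 := by
      rw [hid]; linarith
    have h3 : m' - (⌊(m':ℝ)*α⌋ + ⌊(m':ℝ)*β⌋ + ⌊(m':ℝ)*γ⌋) < 3 := by exact_mod_cast this
    omega
lemma countLe_Btgamma_eq {α β : ℝ} (ha : 0 < α) (ha1 : α < 1) (ha2 : 2*α < 1)
    (hirra : Irrational α) (hb : 0 < β) (hb2 : 2*β < 1) (hirrb : Irrational β)
    {Btβ Btγ : Set ℤ}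
    (hBtβ : Btβ = {m : ℤ | ∃ n : ℕ, 0 < n ∧ m = btil α β n})
    (hBtγ : Btγ = {m : ℤ | 0 < m ∧ m ∉ beatty α ∧ m ∉ Btβ})
    (m : ℤ) (hm : 0 ≤ m) :
    (countLe Btγ m : ℤ) = m - ⌊((m:ℝ)+1)*α⌋ - ⌊((m:ℝ)+1)*β⌋ -
      (if ((m+1) ∈ beatty α ∧ (m+1) ∈ beatty β) then 1 else 0) := by
  have hA := countLe_beatty ha ha1 hirra m hm
  have hB := countLe_Btil ha ha1 hirra hb hb2 hirrb hBtβ m hm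
  have hP := count_partition (β := β)
    (fun x h1 h2 => beatty_Btil_disjoint ha ha2 hirra hBtβ h1 h2) hBtγ m hm
  have hm1R : (0:ℝ) ≤ (m:ℝ) := by exact_mod_cast hm
  have hA0 : (0:ℤ) ≤ ⌊((m:ℝ)+1)*α⌋ := Int.floor_nonneg.mpr (by nlinarith)
  have hB0 : (0:ℤ) ≤ ⌊((m:ℝ)+1)*β⌋ := Int.floor_nonneg.mpr (by nlinarith)
  have hmn : ((m.toNat : ℕ) : ℤ) = m := Int.toNat_of_nonneg hm
  by_cases hdp : ((m+1) ∈ beatty α ∧ (m+1) ∈ beatty β)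
  · rw [if_pos hdp] at hB ⊢
    have hAZ : ((countLe (beatty α) m : ℕ) : ℤ) = ⌊((m:ℝ)+1)*α⌋ := by
      rw [hA, Int.toNat_of_nonneg hA0]
    have hBZ : ((countLe Btβ m : ℕ) : ℤ) = ⌊((m:ℝ)+1)*β⌋ + 1 := by
      rw [hB, Int.toNat_of_nonneg (by omega)]
    omega
  · rw [if_neg hdp] at hB ⊢
    have hAZ : ((countLe (beatty α) m : ℕ) : ℤ) = ⌊((m:ℝ)+1)*α⌋ := by
      rw [hA, Int.toNat_of_nonneg hA0]
    have hBZ : ((countLe Btβ m : ℕ) : ℤ) = ⌊((m:ℝ)+1)*β⌋ + 0 := by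
      rw [hB, Int.toNat_of_nonneg (by omega)]
    omega
theorem thm3_gamma_error (α β γ : ℝ)
    (hirra : Irrational α) (hirrb : Irrational β) (hirrc : Irrational γ)
    (ha : 0 < α) (hb : 0 < β) (hc : 0 < γ) (hsum : α + β + γ = 1)
    (hmax : max α β < γ)
    (Btβ : Set ℤ) (hBtβ : Btβ = {m : ℤ | ∃ n : ℕ, 0 < n ∧ m = btil α β n})
    (Btγ : Set ℤ) (hBtγ : Btγ = {m : ℤ | 0 < m ∧ m ∉ beatty α ∧ m ∉ Btβ})
    (ct : ℕ → ℤ)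
    (hmono : ∀ n m : ℕ, 0 < n → n < m → ct n < ct m)
    (hmem : ∀ n : ℕ, 0 < n → ct n ∈ Btγ)
    (hsurj : ∀ x ∈ Btγ, ∃ n : ℕ, 0 < n ∧ ct n = x) :
    ∀ n : ℕ, 0 < n → ⌊(n : ℝ) / γ⌋ - ct n ∈ ({0, 1, 2} : Set ℤ) := by
  have hαγ : α < γ := lt_of_le_of_lt (le_max_left α β) hmax
  have hβγ : β < γ := lt_of_le_of_lt (le_max_right α β) hmax
  have hc1 : γ < 1 := by linarith
  have ha1 : α < 1 := by linarith
  have hb1 : β < 1 := by linarith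
  have ha2 : 2*α < 1 := by linarith
  have hb2 : 2*β < 1 := by linarith
  -- positivity of ct
  have hctpos : ∀ k : ℕ, 0 < k → 1 ≤ ct k := by
    intro k hk
    have := hmem k hk
    rw [hBtγ] at this
    exact this.1
  -- claim A : n ≤ #(Btγ ∩ [1, ct n])
  have claimA : ∀ k : ℕ, 0 < k → k ≤ countLe Btγ (ct k) := by
    intro k hk
    have hcard : (Finset.Icc 1 k).card = k := by rw [Nat.card_Icc]; omega
    have hle : (Finset.Icc 1 k).card ≤
        ((Finset.Icc 1 (ct k)).filter (fun x => x ∈ Btγ)).card := by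
      apply Finset.card_le_card_of_injOn (fun i => ct i)
      · intro i hi
        rw [Finset.mem_coe, Finset.mem_Icc] at hi
        rw [Finset.mem_coe, Finset.mem_filter, Finset.mem_Icc]
        have hipos : 0 < i := by omega
        refine ⟨⟨hctpos i hipos, ?_⟩, hmem i hipos⟩
        rcases eq_or_lt_of_le hi.2 with h | h
        · rw [h]
        · exact (hmono i k hipos h).le
      · intro a' ha' b' hb' hab
        simp only [Finset.coe_Icc, Set.mem_Icc] at ha' hb'
        by_contra hne
        rcases lt_or_gt_of_ne hne with h | h
        · exact absurd hab (hmono a' b' (by omega) h).ne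
        · exact absurd hab.symm (hmono b' a' (by omega) h).ne
    unfold countLe
    omega
  -- claim B : #(Btγ ∩ [1, ct n - 1]) ≤ n - 1
  have claimB : ∀ k : ℕ, 0 < k → countLe Btγ (ct k - 1) + 1 ≤ k := by
    intro k hk
    unfold countLe
    have hsub : ((Finset.Icc 1 (ct k - 1)).filter (fun x => x ∈ Btγ)) ⊆
        (Finset.Icc 1 (k-1)).image (fun i => ct i) := by
      intro x hx
      rw [Finset.mem_filter, Finset.mem_Icc] at hx
      obtain ⟨i, hi, hie⟩ := hsurj x hx.2
      rw [Finset.mem_image]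
      refine ⟨i, ?_, hie⟩
      rw [Finset.mem_Icc]
      refine ⟨by omega, ?_⟩
      by_contra hgt
      push_neg at hgt
      have hki : k ≤ i := by omega
      rcases eq_or_lt_of_le hki with h | h
      · rw [← h] at hie; omega
      · have := hmono k i hk h; omega
    calc ((Finset.Icc 1 (ct k - 1)).filter (fun x => x ∈ Btγ)).card + 1
        ≤ ((Finset.Icc 1 (k-1)).image (fun i => ct i)).card + 1 :=
          Nat.add_le_add_right (Finset.card_le_card hsub) 1
      _ ≤ (Finset.Icc 1 (k-1)).card + 1 := Nat.add_le_add_right Finset.card_image_le 1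
      _ ≤ k := by rw [Nat.card_Icc]; omega
  have hformula := countLe_Btgamma_eq ha ha1 ha2 hirra hb hb2 hirrb hBtβ hBtγ
  intro n hn
  set c := ⌊(n : ℝ)/γ⌋ with hcdef
  have hnR : (1:ℝ) ≤ (n:ℝ) := by exact_mod_cast hn
  have hc_ge1 : 1 ≤ c := by
    rw [hcdef, Int.le_floor]
    push_cast
    rw [le_div_iff₀ hc]
    linarith
  have hfloor_le : (c:ℝ) ≤ (n:ℝ)/γ := Int.floor_le _
  have hcγ_le : (c:ℝ)*γ ≤ n := by
    rw [← le_div_iff₀ hc]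
    exact hfloor_le
  have hcγ : (c:ℝ)*γ < n := by
    have hne : (c:ℝ)*γ ≠ (n:ℝ) := by
      have := (hirrc.intCast_mul (show c ≠ 0 by omega)).ne_int (n:ℤ)
      push_cast at this
      exact this
    exact lt_of_le_of_ne hcγ_le hne
  have hcγ' : (n:ℝ) < ((c:ℝ)+1)*γ := by
    have h := Int.lt_floor_add_one ((n:ℝ)/γ)
    rw [div_lt_iff₀ hc] at h
    push_cast at h ⊢
    linarith
  -- upper bound : ct n ≤ c
  have hUB : ct n ≤ c := by
    by_contra hcon
    push_neg at hcon
    have h1 : countLe Btγ c ≤ countLe Btγ (ct n - 1) := countLe_mono _ (by omega)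
    have h2 := claimB n hn
    have h3 : (n:ℤ) ≤ (countLe Btγ c : ℤ) := by
      rw [hformula c (by omega)]
      have hcast : ((c:ℝ)+1) = ((c+1 : ℤ):ℝ) := by push_cast; ring
      rw [hcast]
      obtain ⟨⟨hS1, hS2⟩, hSid⟩ := floor_sum_bounds hirra hirrb hirrc hsum (c+1) (by omega)
      have hγn : (n:ℤ) ≤ ⌊((c+1:ℤ):ℝ)*γ⌋ := by
        rw [Int.le_floor]
        push_cast
        linarith
      by_cases hdp : ((c+1) ∈ beatty α ∧ (c+1) ∈ beatty β)
      · rw [if_pos hdp]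
        have hfa := fract_gt_of_mem_beatty ha ha1 hirra hdp.1
        have hfb := fract_gt_of_mem_beatty hb hb1 hirrb hdp.2
        have hfc := Int.fract_nonneg (((c+1:ℤ):ℝ)*γ)
        have hSgt : (1:ℝ) <
            ((c+1 - (⌊((c+1:ℤ):ℝ)*α⌋ + ⌊((c+1:ℤ):ℝ)*β⌋ + ⌊((c+1:ℤ):ℝ)*γ⌋) : ℤ):ℝ) := by
          rw [hSid]
          linarith
        have hS2' : 2 ≤ c+1 - (⌊((c+1:ℤ):ℝ)*α⌋ + ⌊((c+1:ℤ):ℝ)*β⌋ + ⌊((c+1:ℤ):ℝ)*γ⌋) := by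
          have h' : (1:ℤ) < c+1 - (⌊((c+1:ℤ):ℝ)*α⌋ + ⌊((c+1:ℤ):ℝ)*β⌋ + ⌊((c+1:ℤ):ℝ)*γ⌋) := by
            exact_mod_cast hSgt
          omega
        omega
      · rw [if_neg hdp]
        omega
    omega
  -- lower bound : c ≤ ct n + 2
  have hLB : c ≤ ct n + 2 := by
    by_cases hc3 : c ≤ 2
    · have := hctpos n hn; omega
    · push_neg at hc3
      by_contra hcon
      push_neg at hcon
      have h1 := claimA n hn
      have h2 : countLe Btγ (ct n) ≤ countLe Btγ (c-3) := countLe_mono _ (by omega)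
      have h3 : (countLe Btγ (c-3) : ℤ) + 1 ≤ n := by
        rw [hformula (c-3) (by omega)]
        have hcast : (((c-3:ℤ)):ℝ)+1 = ((c-2 : ℤ):ℝ) := by push_cast; ring
        have hidx : (c-3)+1 = c-2 := by ring
        rw [hcast, hidx]
        obtain ⟨⟨hS1, hS2⟩, hSid⟩ := floor_sum_bounds hirra hirrb hirrc hsum (c-2) (by omega)
        have hγle : ⌊((c-2:ℤ):ℝ)*γ⌋ ≤ n - 1 := by
          have hle : ((c-2:ℤ):ℝ)*γ ≤ (c:ℝ)*γ := by
            have : ((c-2:ℤ):ℝ) ≤ (c:ℝ) := by push_cast; linarith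
            nlinarith
          have h' : (⌊((c-2:ℤ):ℝ)*γ⌋ : ℝ) < (n:ℝ) :=
            lt_of_le_of_lt (le_trans (Int.floor_le _) hle) hcγ
          have h'' : ⌊((c-2:ℤ):ℝ)*γ⌋ < (n:ℤ) := by exact_mod_cast h'
          omega
        by_cases hdp : ((c-2) ∈ beatty α ∧ (c-2) ∈ beatty β)
        · rw [if_pos hdp]
          omega
        · rw [if_neg hdp]
          have hScases : c-2 - (⌊((c-2:ℤ):ℝ)*α⌋ + ⌊((c-2:ℤ):ℝ)*β⌋ + ⌊((c-2:ℤ):ℝ)*γ⌋) = 1 ∨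
              c-2 - (⌊((c-2:ℤ):ℝ)*α⌋ + ⌊((c-2:ℤ):ℝ)*β⌋ + ⌊((c-2:ℤ):ℝ)*γ⌋) = 2 := by omega
          rcases hScases with hS | hS
          · omega
          · have hsum2 : Int.fract (((c-2:ℤ):ℝ)*α) + Int.fract (((c-2:ℤ):ℝ)*β)
                + Int.fract (((c-2:ℤ):ℝ)*γ) = 2 := by
              rw [← hSid, hS]
              norm_num
            have hfa1 := Int.fract_lt_one (((c-2:ℤ):ℝ)*α)
            have hfb1 := Int.fract_lt_one (((c-2:ℤ):ℝ)*β)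
            have hz : 1 - 2*γ ≤ Int.fract (((c-2:ℤ):ℝ)*γ) := by
              by_contra hz'
              push_neg at hz'
              have hxgt : 1 - α < Int.fract (((c-2:ℤ):ℝ)*α) := by
                by_contra hx'
                push_neg at hx'
                have : (1:ℝ) < Int.fract (((c-2:ℤ):ℝ)*β) := by linarith
                linarith
              have hygt : 1 - β < Int.fract (((c-2:ℤ):ℝ)*β) := by
                by_contra hy'
                push_neg at hy'
                have : (1:ℝ) < Int.fract (((c-2:ℤ):ℝ)*α) := by linarith
                linarith
              exact hdp ⟨mem_beatty_of_fract_gt ha ha1 hirra (by omega) hxgt,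
                mem_beatty_of_fract_gt hb hb1 hirrb (by omega) hygt⟩
            have hfr : Int.fract (((c-2:ℤ):ℝ)*γ)
                = ((c-2:ℤ):ℝ)*γ - (⌊((c-2:ℤ):ℝ)*γ⌋ : ℝ) := by
              rw [← Int.self_sub_floor]
            have hexp : ((c-2:ℤ):ℝ)*γ = (c:ℝ)*γ - 2*γ := by push_cast; ring
            have hfl' : (⌊((c-2:ℤ):ℝ)*γ⌋ : ℝ) < (n:ℝ) - 1 := by linarith
            have hγle2 : ⌊((c-2:ℤ):ℝ)*γ⌋ ≤ n - 2 := by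
              have h5 : ⌊((c-2:ℤ):ℝ)*γ⌋ < (n:ℤ) - 1 := by exact_mod_cast hfl'
              omega
            omega
      omega
  have hfinal : c - ct n = 0 ∨ c - ct n = 1 ∨ c - ct n = 2 := by omega
  simp only [Set.mem_insert_iff, Set.mem_singleton_iff]
  exact hfinal
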